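/- Let r, s, t ∈ (0, 1/2) with t < r + s − 1/2. Then there exists a constant C = C(r,s,t) such that for all doubly-infinite sequences y, z : ℤ → ℂ with finite weighted norms, ‖y * z‖_{H^t} ≤ C ‖y‖_{H^r} ‖z‖_{H^s}, where (y*z)_k = Σ_{l∈ℤ} y_l z_{k−l} and ‖y‖_{H^s}² = Σ_{k∈ℤ} (1+k²)^s |y_k|². -/

import Mathlib

open Real

open MeasureTheory
open scoped ENNReal NNReal

section ConvolutionWeightedAux

lemma ennreal_cs (u v : ℤ → ℝ≥0∞) :
    (∑' l, u l * v l) ^ 2 ≤ (∑' l, (u l) ^ 2) * (∑' l, (v l) ^ 2) := by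
  have h := ENNReal.lintegral_mul_le_Lp_mul_Lq (Measure.count : Measure ℤ)
    (p := 2) (q := 2) ⟨by norm_num, by norm_num, by norm_num⟩ (f := u) (g := v)
    Measurable.of_discrete.aemeasurable Measurable.of_discrete.aemeasurable
  simp only [Pi.mul_apply, lintegral_count] at h
  have h2 : ∀ w : ℤ → ℝ≥0∞, ∑' l, w l ^ (2:ℝ) = ∑' l, w l ^ 2 := fun w =>
    tsum_congr fun l => by rw [← ENNReal.rpow_natCast (w l) 2]; norm_num
  rw [h2, h2] at h
  calc (∑' l, u l * v l) ^ 2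
      ≤ ((∑' l, u l ^ 2) ^ (1/(2:ℝ)) * (∑' l, v l ^ 2) ^ (1/(2:ℝ))) ^ 2 :=
        pow_le_pow_left' h 2
    _ = (∑' l, (u l) ^ 2) * (∑' l, (v l) ^ 2) := by
        rw [mul_pow, ← ENNReal.rpow_natCast (_ ^ (1/(2:ℝ))) 2,
          ← ENNReal.rpow_natCast (_ ^ (1/(2:ℝ))) 2, ← ENNReal.rpow_mul, ← ENNReal.rpow_mul]
        norm_num

lemma summable_weight {c : ℝ} (hc : 1/2 < c) :
    Summable (fun l : ℤ => ((1:ℝ) + (l:ℝ)^2) ^ (-c)) := by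
  have hb : (1:ℝ) < 2*c := by linarith
  have hg : Summable (fun l : ℤ => |(l:ℝ)| ^ (-(2*c)) + (if l = 0 then (1:ℝ) else 0)) :=
    (summable_abs_int_rpow hb).add
      (summable_of_ne_finset_zero (s := {0}) (by intro b hb'; simp at hb'; simp [hb']))
  refine Summable.of_nonneg_of_le (fun l => Real.rpow_nonneg (by positivity) _) (fun l => ?_) hg
  rcases eq_or_ne l 0 with rfl | hl
  · rw [if_pos rfl]
    simp only [Int.cast_zero, abs_zero]
    rw [Real.zero_rpow (neg_ne_zero.mpr (by positivity))]
    norm_num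
  · have h1 : (0:ℝ) < (l:ℝ)^2 := by
      have : (l:ℝ) ≠ 0 := Int.cast_ne_zero.mpr hl
      positivity
    have h2 : ((1:ℝ) + (l:ℝ)^2) ^ (-c) ≤ ((l:ℝ)^2) ^ (-c) :=
      Real.rpow_le_rpow_of_nonpos h1 (by linarith) (by linarith)
    refine h2.trans ?_
    rw [if_neg hl, add_zero, ← sq_abs, ← Real.rpow_natCast |(l:ℝ)| 2,
      ← Real.rpow_mul (abs_nonneg _)]
    norm_num

private lemma key_aux {t p q a b z' : ℝ} (ht0 : 0 ≤ t) (htp : t ≤ p) (htq : t ≤ q)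
    (ha : 1 ≤ a) (hb : 1 ≤ b) (hba : b ≤ a) (hz0 : 0 ≤ z') (hza : z' ≤ 4*a) :
    z' ^ t * (a ^ (-p) * b ^ (-q)) ≤ (4:ℝ) ^ t * b ^ (t-p-q) := by
  have ha0 : (0:ℝ) < a := by linarith
  have hb0 : (0:ℝ) < b := by linarith
  have h1 : z' ^ t ≤ (4*a) ^ t := Real.rpow_le_rpow hz0 hza ht0
  have h2 : (4*a) ^ t = 4 ^ t * a ^ t := Real.mul_rpow (by norm_num) ha0.le
  have h3 : z' ^ t * (a ^ (-p) * b ^ (-q)) ≤ 4 ^ t * a ^ t * (a ^ (-p) * b ^ (-q)) :=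
    mul_le_mul_of_nonneg_right (h1.trans_eq h2) (by positivity)
  refine h3.trans ?_
  rw [mul_assoc, ← mul_assoc (a^t), ← Real.rpow_add ha0]
  have h4 : a ^ (t + -p) ≤ b ^ (t + -p) :=
    Real.rpow_le_rpow_of_nonpos hb0 hba (by linarith)
  calc (4:ℝ)^t * (a ^ (t + -p) * b ^ (-q)) ≤ (4:ℝ)^t * (b ^ (t + -p) * b ^ (-q)) :=
        mul_le_mul_of_nonneg_left (mul_le_mul_of_nonneg_right h4 (by positivity))
          (by positivity)
    _ = (4:ℝ)^t * b ^ (t-p-q) := by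
        rw [← Real.rpow_add hb0]
        congr 1

lemma kernel_bound {r s t : ℝ} (htr : t ≤ r) (hts : t ≤ s) (ht0 : 0 ≤ t) (k l : ℤ) :
    ((1:ℝ) + (k:ℝ)^2) ^ t * (((1:ℝ) + (l:ℝ)^2) ^ (-r) * ((1:ℝ) + ((k-l:ℤ):ℝ)^2) ^ (-s)) ≤
      (4:ℝ) ^ t * (((1:ℝ) + (l:ℝ)^2) ^ (t-r-s) + ((1:ℝ) + ((k-l:ℤ):ℝ)^2) ^ (t-r-s)) := by
  have hcast : ((k-l:ℤ):ℝ) = (k:ℝ) - (l:ℝ) := by push_cast; ring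
  rw [hcast]
  have hx : (1:ℝ) ≤ 1 + (l:ℝ)^2 := by nlinarith [sq_nonneg ((l:ℝ))]
  have hy : (1:ℝ) ≤ 1 + ((k:ℝ)-(l:ℝ))^2 := by nlinarith [sq_nonneg ((k:ℝ)-(l:ℝ))]
  have hz0 : (0:ℝ) ≤ 1 + (k:ℝ)^2 := by positivity
  have hxe : (0:ℝ) ≤ (1 + (l:ℝ)^2) ^ (t-r-s) := Real.rpow_nonneg (by positivity) _
  have hye : (0:ℝ) ≤ (1 + ((k:ℝ)-(l:ℝ))^2) ^ (t-r-s) := Real.rpow_nonneg (by positivity) _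
  have h4t : (0:ℝ) ≤ (4:ℝ)^t := Real.rpow_nonneg (by norm_num) _
  rcases le_total ((1:ℝ) + ((k:ℝ)-(l:ℝ))^2) ((1:ℝ) + (l:ℝ)^2) with hyx | hxy
  · have hz4 : 1 + (k:ℝ)^2 ≤ 4*(1 + (l:ℝ)^2) := by nlinarith [sq_nonneg ((k:ℝ) - 2*(l:ℝ))]
    have h := key_aux ht0 htr hts hx hy hyx hz0 hz4
    refine h.trans ?_
    nlinarith
  · have hz4 : 1 + (k:ℝ)^2 ≤ 4*(1 + ((k:ℝ)-(l:ℝ))^2) := by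
      nlinarith [sq_nonneg ((k:ℝ) - 2*((k:ℝ)-(l:ℝ)))]
    have h := key_aux ht0 hts htr hy hx hxy hz0 hz4
    rw [mul_comm (((1:ℝ)+((k:ℝ)-(l:ℝ))^2) ^ (-s))] at h
    refine h.trans ?_
    have he : t - s - r = t - r - s := by ring
    rw [he]
    nlinarith

end ConvolutionWeightedAux

/-- Convolution estimate in weighted ℓ² spaces of sequences over ℤ:
for `r, s, t ∈ (0,1/2)` with `t < r + s − 1/2`, there is `C` with
`‖y * z‖_{H^t} ≤ C ‖y‖_{H^r} ‖z‖_{H^s}`. -/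
theorem convolution_weighted_l2 (r s t : ℝ)
    (hr : r ∈ Set.Ioo (0 : ℝ) (1 / 2)) (hs : s ∈ Set.Ioo (0 : ℝ) (1 / 2))
    (ht : t ∈ Set.Ioo (0 : ℝ) (1 / 2)) (hrst : t < r + s - 1 / 2) :
    ∃ C : ℝ, 0 < C ∧ ∀ y z : ℤ → ℂ,
      Summable (fun k : ℤ => ((1 : ℝ) + (k : ℝ) ^ 2) ^ r * ‖y k‖ ^ 2) →
      Summable (fun k : ℤ => ((1 : ℝ) + (k : ℝ) ^ 2) ^ s * ‖z k‖ ^ 2) →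
      Real.sqrt (∑' k : ℤ, ((1 : ℝ) + (k : ℝ) ^ 2) ^ t * ‖∑' l : ℤ, y l * z (k - l)‖ ^ 2) ≤
        C * Real.sqrt (∑' k : ℤ, ((1 : ℝ) + (k : ℝ) ^ 2) ^ r * ‖y k‖ ^ 2) *
          Real.sqrt (∑' k : ℤ, ((1 : ℝ) + (k : ℝ) ^ 2) ^ s * ‖z k‖ ^ 2) := by
  obtain ⟨hr0, hr2⟩ := hr
  obtain ⟨hs0, hs2⟩ := hs
  obtain ⟨ht0, ht2⟩ := ht
  have htr : t ≤ r := by linarith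
  have hts : t ≤ s := by linarith
  have hc : 1/2 < r + s - t := by linarith
  -- the weight sum
  have hSsum : Summable (fun l : ℤ => ((1:ℝ) + (l:ℝ)^2) ^ (t-r-s)) :=
    (summable_weight hc).congr fun l => by rw [show -(r+s-t) = t-r-s by ring]
  set S : ℝ := ∑' l : ℤ, ((1:ℝ) + (l:ℝ)^2) ^ (t-r-s) with hSdef
  have hSnonneg : ∀ l : ℤ, 0 ≤ ((1:ℝ) + (l:ℝ)^2) ^ (t-r-s) := fun l =>
    Real.rpow_nonneg (by positivity) _
  have hSpos : 0 < S := hSsum.tsum_pos hSnonneg 0 (Real.rpow_pos_of_pos (by norm_num) _)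
  set A : ℝ := 4 ^ t * (2 * S) with hAdef
  have h4t : (0:ℝ) < 4 ^ t := Real.rpow_pos_of_pos (by norm_num) _
  have hA : 0 < A := by positivity
  refine ⟨Real.sqrt A, Real.sqrt_pos.mpr hA, fun y z hY hZ => ?_⟩
  -- ENNReal setup
  set W : ℤ → ℝ≥0∞ := fun m => ENNReal.ofReal ((1:ℝ) + (m:ℝ)^2) with hWdef
  have hW0 : ∀ m, W m ≠ 0 := fun m => by
    simp only [hWdef, ne_eq, ENNReal.ofReal_eq_zero, not_le]; positivity
  have hWt : ∀ m, W m ≠ ⊤ := fun m => ENNReal.ofReal_ne_top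
  have hWof : ∀ (m : ℤ) (e : ℝ), W m ^ e = ENNReal.ofReal (((1:ℝ) + (m:ℝ)^2) ^ e) := by
    intro m e
    show ENNReal.ofReal ((1:ℝ) + (m:ℝ)^2) ^ e = _
    rw [← ENNReal.ofReal_rpow_of_pos (x := (1:ℝ)+(m:ℝ)^2) (p := e) (by positivity)]
  have hcancel : ∀ (m : ℤ) (e : ℝ), W m ^ (-e) * W m ^ e = 1 := fun m e => by
    rw [← ENNReal.rpow_add _ _ (hW0 m) (hWt m), neg_add_cancel, ENNReal.rpow_zero]
  have hsq : ∀ (m : ℤ) (e : ℝ), (W m ^ e) ^ 2 = W m ^ (e * 2) := fun m e => by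
    rw [← ENNReal.rpow_natCast (W m ^ e) 2, ← ENNReal.rpow_mul]
    norm_num
  -- weighted ENNReal sequences
  set aY : ℤ → ℝ≥0∞ := fun m => W m ^ r * (‖y m‖₊ : ℝ≥0∞) ^ 2 with haYdef
  set bZ : ℤ → ℝ≥0∞ := fun m => W m ^ s * (‖z m‖₊ : ℝ≥0∞) ^ 2 with hbZdef
  have haY : ∀ m, aY m = ENNReal.ofReal (((1:ℝ) + (m:ℝ)^2) ^ r * ‖y m‖ ^ 2) := fun m => by
    show W m ^ r * (‖y m‖₊ : ℝ≥0∞) ^ 2 = _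
    rw [hWof, ENNReal.ofReal_mul (Real.rpow_nonneg (by positivity) _),
      ENNReal.ofReal_pow (norm_nonneg _), ofReal_norm]; rfl
  have hbZ : ∀ m, bZ m = ENNReal.ofReal (((1:ℝ) + (m:ℝ)^2) ^ s * ‖z m‖ ^ 2) := fun m => by
    show W m ^ s * (‖z m‖₊ : ℝ≥0∞) ^ 2 = _
    rw [hWof, ENNReal.ofReal_mul (Real.rpow_nonneg (by positivity) _),
      ENNReal.ofReal_pow (norm_nonneg _), ofReal_norm]; rfl
  have haYsum : ∑' m, aY m
      = ENNReal.ofReal (∑' m : ℤ, ((1:ℝ) + (m:ℝ)^2) ^ r * ‖y m‖ ^ 2) := by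
    rw [ENNReal.ofReal_tsum_of_nonneg (fun m => by positivity) hY]
    exact tsum_congr haY
  have hbZsum : ∑' m, bZ m
      = ENNReal.ofReal (∑' m : ℤ, ((1:ℝ) + (m:ℝ)^2) ^ s * ‖z m‖ ^ 2) := by
    rw [ENNReal.ofReal_tsum_of_nonneg (fun m => by positivity) hZ]
    exact tsum_congr hbZ
  -- Step 1: per-k triangle inequality in ℝ≥0∞
  have step1 : ∀ k : ℤ, (‖∑' l : ℤ, y l * z (k - l)‖₊ : ℝ≥0∞) ≤
      ∑' l : ℤ, (‖y l‖₊ : ℝ≥0∞) * (‖z (k - l)‖₊ : ℝ≥0∞) := by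
    intro k
    by_cases hsum : Summable (fun l : ℤ => ‖y l‖₊ * ‖z (k - l)‖₊)
    · have h1 : ‖∑' l : ℤ, y l * z (k - l)‖₊ ≤ ∑' l : ℤ, ‖y l‖₊ * ‖z (k - l)‖₊ := by
        have h2 := nnnorm_tsum_le (f := fun l : ℤ => y l * z (k - l))
          (hsum.congr fun l => (nnnorm_mul _ _).symm)
        refine h2.trans_eq (tsum_congr fun l => nnnorm_mul _ _)
      calc (‖∑' l : ℤ, y l * z (k - l)‖₊ : ℝ≥0∞)
          ≤ ((∑' l : ℤ, ‖y l‖₊ * ‖z (k - l)‖₊ : ℝ≥0) : ℝ≥0∞) := ENNReal.coe_le_coe.mpr h1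
        _ = ∑' l : ℤ, (‖y l‖₊ : ℝ≥0∞) * (‖z (k - l)‖₊ : ℝ≥0∞) := by
            rw [ENNReal.coe_tsum hsum]; exact tsum_congr fun l => ENNReal.coe_mul ..
    · have : ∑' l : ℤ, (‖y l‖₊ : ℝ≥0∞) * (‖z (k - l)‖₊ : ℝ≥0∞) = ⊤ := by
        have := (not_iff_not.mpr (ENNReal.tsum_coe_ne_top_iff_summable
          (f := fun l : ℤ => ‖y l‖₊ * ‖z (k - l)‖₊))).mpr hsum
        push_neg at this
        rw [← this]
        exact (tsum_congr fun l => ENNReal.coe_mul ..).symm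
      rw [this]; exact le_top
  -- Step 2: Cauchy-Schwarz per k
  have step2 : ∀ k : ℤ, (∑' l : ℤ, (‖y l‖₊ : ℝ≥0∞) * (‖z (k - l)‖₊ : ℝ≥0∞)) ^ 2 ≤
      (∑' l : ℤ, W l ^ (-r) * W (k - l) ^ (-s)) * (∑' l : ℤ, aY l * bZ (k - l)) := by
    intro k
    have h := ennreal_cs (fun l => W l ^ (-(r/2)) * W (k - l) ^ (-(s/2)))
      (fun l => (W l ^ (r/2) * (‖y l‖₊ : ℝ≥0∞)) * (W (k - l) ^ (s/2) * (‖z (k - l)‖₊ : ℝ≥0∞)))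
    have huv : ∀ l : ℤ, (W l ^ (-(r/2)) * W (k - l) ^ (-(s/2))) *
        ((W l ^ (r/2) * (‖y l‖₊ : ℝ≥0∞)) * (W (k - l) ^ (s/2) * (‖z (k - l)‖₊ : ℝ≥0∞)))
        = (‖y l‖₊ : ℝ≥0∞) * (‖z (k - l)‖₊ : ℝ≥0∞) := by
      intro l
      have e1 := hcancel l (r/2)
      have e2 := hcancel (k - l) (s/2)
      calc (W l ^ (-(r/2)) * W (k - l) ^ (-(s/2))) *
            ((W l ^ (r/2) * (‖y l‖₊ : ℝ≥0∞)) * (W (k - l) ^ (s/2) * (‖z (k - l)‖₊ : ℝ≥0∞)))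
          = (W l ^ (-(r/2)) * W l ^ (r/2)) * (W (k - l) ^ (-(s/2)) * W (k - l) ^ (s/2)) *
            ((‖y l‖₊ : ℝ≥0∞) * (‖z (k - l)‖₊ : ℝ≥0∞)) := by ring
        _ = (‖y l‖₊ : ℝ≥0∞) * (‖z (k - l)‖₊ : ℝ≥0∞) := by rw [e1, e2, one_mul, one_mul]
    have hu2 : ∀ l : ℤ, ((W l ^ (-(r/2)) * W (k - l) ^ (-(s/2)))) ^ 2
        = W l ^ (-r) * W (k - l) ^ (-s) := by
      intro l
      rw [mul_pow, hsq, hsq, show -(r/2) * 2 = -r by ring, show -(s/2) * 2 = -s by ring]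
    have hv2 : ∀ l : ℤ, ((W l ^ (r/2) * (‖y l‖₊ : ℝ≥0∞)) *
        (W (k - l) ^ (s/2) * (‖z (k - l)‖₊ : ℝ≥0∞))) ^ 2 = aY l * bZ (k - l) := by
      intro l
      rw [mul_pow, mul_pow, mul_pow, hsq, hsq, show r/2 * 2 = r by ring,
        show s/2 * 2 = s by ring]
    calc (∑' l : ℤ, (‖y l‖₊ : ℝ≥0∞) * (‖z (k - l)‖₊ : ℝ≥0∞)) ^ 2
        = (∑' l : ℤ, (W l ^ (-(r/2)) * W (k - l) ^ (-(s/2))) *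
          ((W l ^ (r/2) * (‖y l‖₊ : ℝ≥0∞)) * (W (k - l) ^ (s/2) * (‖z (k - l)‖₊ : ℝ≥0∞)))) ^ 2 := by
          rw [tsum_congr huv]
      _ ≤ _ := by
          refine h.trans ?_
          rw [tsum_congr hu2, tsum_congr hv2]
  -- Step 3: kernel sum bound
  set AE : ℝ≥0∞ := ENNReal.ofReal A with hAEdef
  have step3 : ∀ k : ℤ, W k ^ t * ∑' l : ℤ, W l ^ (-r) * W (k - l) ^ (-s) ≤ AE := by
    intro k
    rw [← ENNReal.tsum_mul_left]
    have hterm : ∀ l : ℤ, W k ^ t * (W l ^ (-r) * W (k - l) ^ (-s)) ≤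
        ENNReal.ofReal ((4:ℝ) ^ t * (((1:ℝ) + (l:ℝ)^2) ^ (t-r-s)
          + ((1:ℝ) + ((k-l:ℤ):ℝ)^2) ^ (t-r-s))) := by
      intro l
      rw [hWof, hWof, hWof,
        ← ENNReal.ofReal_mul (Real.rpow_nonneg (by positivity) _),
        ← ENNReal.ofReal_mul (Real.rpow_nonneg (by positivity) _)]
      exact ENNReal.ofReal_le_ofReal (kernel_bound htr hts ht0.le k l)
    refine (ENNReal.tsum_le_tsum hterm).trans ?_
    have hsplit : ∑' l : ℤ, ENNReal.ofReal ((4:ℝ) ^ t * (((1:ℝ) + (l:ℝ)^2) ^ (t-r-s)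
        + ((1:ℝ) + ((k-l:ℤ):ℝ)^2) ^ (t-r-s)))
        = ENNReal.ofReal ((4:ℝ)^t) * (∑' l : ℤ, ENNReal.ofReal (((1:ℝ) + (l:ℝ)^2) ^ (t-r-s))
          + ∑' l : ℤ, ENNReal.ofReal (((1:ℝ) + ((k-l:ℤ):ℝ)^2) ^ (t-r-s))) := by
      rw [← ENNReal.tsum_add, ← ENNReal.tsum_mul_left]
      refine tsum_congr fun l => ?_
      rw [← ENNReal.ofReal_add (hSnonneg l) (hSnonneg (k - l)),
        ← ENNReal.ofReal_mul (le_of_lt h4t)]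
    rw [hsplit]
    have hre : ∑' l : ℤ, ENNReal.ofReal (((1:ℝ) + ((k-l:ℤ):ℝ)^2) ^ (t-r-s))
        = ∑' l : ℤ, ENNReal.ofReal (((1:ℝ) + (l:ℝ)^2) ^ (t-r-s)) :=
      (Equiv.subLeft k).tsum_eq (fun m : ℤ => ENNReal.ofReal (((1:ℝ) + (m:ℝ)^2) ^ (t-r-s)))
    rw [hre]
    have hofS : ∑' l : ℤ, ENNReal.ofReal (((1:ℝ) + (l:ℝ)^2) ^ (t-r-s)) = ENNReal.ofReal S := by
      rw [hSdef, ENNReal.ofReal_tsum_of_nonneg hSnonneg hSsum]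
    rw [hofS, hAEdef, hAdef, ENNReal.ofReal_mul (le_of_lt h4t)]
    apply le_of_eq
    congr 1
    rw [show (2:ℝ) * S = S + S by ring, ENNReal.ofReal_add hSpos.le hSpos.le]
  -- Step 4: Fubini
  have step4 : ∑' k : ℤ, ∑' l : ℤ, aY l * bZ (k - l) = (∑' m, aY m) * (∑' m, bZ m) := by
    rw [ENNReal.tsum_comm]
    calc ∑' l : ℤ, ∑' k : ℤ, aY l * bZ (k - l)
        = ∑' l : ℤ, aY l * ∑' k : ℤ, bZ (k - l) := tsum_congr fun l => ENNReal.tsum_mul_left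
      _ = ∑' l : ℤ, aY l * ∑' m, bZ m := by
          refine tsum_congr fun l => ?_
          congr 1
          exact (Equiv.subRight l).tsum_eq bZ
      _ = (∑' m, aY m) * (∑' m, bZ m) := ENNReal.tsum_mul_right
  -- assemble per-k bound
  set f : ℤ → ℝ := fun k => ((1:ℝ) + (k:ℝ)^2) ^ t * ‖∑' l : ℤ, y l * z (k - l)‖ ^ 2 with hfdef
  have hf0 : ∀ k, 0 ≤ f k := fun k => by
    show (0:ℝ) ≤ ((1:ℝ) + (k:ℝ)^2) ^ t * ‖∑' l : ℤ, y l * z (k - l)‖ ^ 2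
    positivity
  have hmain : ∀ k : ℤ, ENNReal.ofReal (f k) ≤ AE * ∑' l : ℤ, aY l * bZ (k - l) := by
    intro k
    have heq : ENNReal.ofReal (f k) = W k ^ t * (‖∑' l : ℤ, y l * z (k - l)‖₊ : ℝ≥0∞) ^ 2 := by
      show ENNReal.ofReal (((1:ℝ) + (k:ℝ)^2) ^ t * ‖∑' l : ℤ, y l * z (k - l)‖ ^ 2) = _
      rw [hWof, ENNReal.ofReal_mul (Real.rpow_nonneg (by positivity) _),
        ENNReal.ofReal_pow (norm_nonneg _), ofReal_norm]; rfl
    rw [heq]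
    calc W k ^ t * (‖∑' l : ℤ, y l * z (k - l)‖₊ : ℝ≥0∞) ^ 2
        ≤ W k ^ t * (∑' l : ℤ, (‖y l‖₊ : ℝ≥0∞) * (‖z (k - l)‖₊ : ℝ≥0∞)) ^ 2 :=
          mul_le_mul_right (pow_le_pow_left' (step1 k) 2) _
      _ ≤ W k ^ t * ((∑' l : ℤ, W l ^ (-r) * W (k - l) ^ (-s)) * (∑' l : ℤ, aY l * bZ (k - l))) :=
          mul_le_mul_right (step2 k) _
      _ = (W k ^ t * ∑' l : ℤ, W l ^ (-r) * W (k - l) ^ (-s)) * (∑' l : ℤ, aY l * bZ (k - l)) := by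
          ring
      _ ≤ AE * ∑' l : ℤ, aY l * bZ (k - l) := mul_le_mul_left (step3 k) _
  -- total bound in ℝ≥0∞
  have htot : ∑' k : ℤ, ENNReal.ofReal (f k) ≤ AE * (∑' m, aY m) * (∑' m, bZ m) := by
    calc ∑' k : ℤ, ENNReal.ofReal (f k)
        ≤ ∑' k : ℤ, AE * ∑' l : ℤ, aY l * bZ (k - l) := ENNReal.tsum_le_tsum hmain
      _ = AE * ∑' k : ℤ, ∑' l : ℤ, aY l * bZ (k - l) := ENNReal.tsum_mul_left
      _ = AE * (∑' m, aY m) * (∑' m, bZ m) := by rw [step4, mul_assoc]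
  rw [haYsum, hbZsum] at htot
  set Yr : ℝ := ∑' m : ℤ, ((1:ℝ) + (m:ℝ)^2) ^ r * ‖y m‖ ^ 2 with hYrdef
  set Zr : ℝ := ∑' m : ℤ, ((1:ℝ) + (m:ℝ)^2) ^ s * ‖z m‖ ^ 2 with hZrdef
  have hYr0 : 0 ≤ Yr := tsum_nonneg fun m => by positivity
  have hZr0 : 0 ≤ Zr := tsum_nonneg fun m => by positivity
  have hRne : AE * ENNReal.ofReal Yr * ENNReal.ofReal Zr ≠ ⊤ := by
    rw [hAEdef]
    exact ENNReal.mul_ne_top (ENNReal.mul_ne_top ENNReal.ofReal_ne_top ENNReal.ofReal_ne_top)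
      ENNReal.ofReal_ne_top
  -- summability of f
  have hfsum : Summable f := by
    have hne : ∑' k : ℤ, ((f k).toNNReal : ℝ≥0∞) ≠ ⊤ := by
      refine ne_top_of_le_ne_top hRne ?_
      exact htot.trans_eq' (tsum_congr fun k => rfl)
    have := ENNReal.tsum_coe_ne_top_iff_summable.mp hne
    exact (NNReal.summable_coe.mpr this).congr fun k => Real.coe_toNNReal _ (hf0 k)
  -- convert to real inequality
  have hofeq : ENNReal.ofReal (∑' k, f k) = ∑' k : ℤ, ENNReal.ofReal (f k) :=
    ENNReal.ofReal_tsum_of_nonneg hf0 hfsum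
  have hreal : ∑' k, f k ≤ A * Yr * Zr := by
    have h1 : (ENNReal.ofReal (∑' k, f k)).toReal ≤
        (AE * ENNReal.ofReal Yr * ENNReal.ofReal Zr).toReal := by
      refine ENNReal.toReal_mono hRne ?_
      rw [hofeq]; exact htot
    rw [ENNReal.toReal_ofReal (tsum_nonneg hf0)] at h1
    refine h1.trans_eq ?_
    rw [hAEdef, ENNReal.toReal_mul, ENNReal.toReal_mul, ENNReal.toReal_ofReal hA.le,
      ENNReal.toReal_ofReal hYr0, ENNReal.toReal_ofReal hZr0]
  -- conclude with sqrt
  calc Real.sqrt (∑' k, f k) ≤ Real.sqrt (A * Yr * Zr) := Real.sqrt_le_sqrt hreal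
    _ = Real.sqrt A * Real.sqrt Yr * Real.sqrt Zr := by
        rw [Real.sqrt_mul (by positivity), Real.sqrt_mul hA.le]
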